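/- Let V_1,...,V_L and R_1,...,R_L be nonnegative integers with V_l <= R_l for each l, and let D_{l-1} = sum_{l'=1}^{l-1} R_{l'}. Then (sum_{l=1}^L V_l) / max(sum_{l=1}^L R_l, 1) <= sum_{l=1}^L V_l / (D_{l-1} + max(R_l, 1)). -/

import Mathlib

/-- Level-wise decomposition bound on the false assignment proportion: for nonnegative
integers `V l ≤ R l` and cumulative counts `D_{l-1} = ∑_{l'=1}^{l-1} R l'`,
`(∑ V l) / max(∑ R l, 1) ≤ ∑_l V l / (D_{l-1} + max(R l, 1))`. -/
theorem fap_level_decomposition (L : ℕ) (V R : ℕ → ℕ) (hVR : ∀ l, V l ≤ R l) :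
    ((∑ l ∈ Finset.Icc 1 L, V l : ℕ) : ℝ) /
        max ((∑ l ∈ Finset.Icc 1 L, R l : ℕ) : ℝ) 1 ≤
      ∑ l ∈ Finset.Icc 1 L,
        (V l : ℝ) / (((∑ l' ∈ Finset.Icc 1 (l - 1), R l' : ℕ) : ℝ) + max (R l : ℝ) 1) := by
  rw [Nat.cast_sum, Finset.sum_div]
  apply Finset.sum_le_sum
  intro l hl
  rcases Nat.eq_zero_or_pos (V l) with h0 | hpos
  · simp [h0]
  · have hR : 1 ≤ R l := le_trans hpos (hVR l)
    have hmaxR : max ((R l : ℝ)) 1 = (R l : ℝ) := by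
      rw [max_eq_left]; exact_mod_cast hR
    rw [hmaxR]
    obtain ⟨h1l, hlL⟩ := Finset.mem_Icc.mp hl
    have hnat : (∑ l' ∈ Finset.Icc 1 (l - 1), R l') + R l ≤ ∑ l' ∈ Finset.Icc 1 L, R l' := by
      have hsum : (∑ l' ∈ Finset.Icc 1 (l - 1), R l') + R l = ∑ l' ∈ Finset.Icc 1 l, R l' := by
        have : l = (l - 1) + 1 := (Nat.succ_pred_eq_of_pos h1l).symm
        rw [this, Finset.sum_Icc_succ_top (by omega)]
        congr 1
      rw [hsum]
      exact Finset.sum_le_sum_of_subset (Finset.Icc_subset_Icc_right hlL)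
    have hden : ((∑ l' ∈ Finset.Icc 1 (l - 1), R l' : ℕ) : ℝ) + (R l : ℝ) ≤
        max ((∑ l' ∈ Finset.Icc 1 L, R l' : ℕ) : ℝ) 1 := by
      refine le_trans ?_ (le_max_left _ _)
      exact_mod_cast hnat
    have hdenpos : (0 : ℝ) < ((∑ l' ∈ Finset.Icc 1 (l - 1), R l' : ℕ) : ℝ) + (R l : ℝ) := by
      have : (1 : ℝ) ≤ (R l : ℝ) := by exact_mod_cast hR
      positivity
    exact div_le_div_of_nonneg_left (by positivity) hdenpos hden
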